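/- (Normal form) Every graph extension grammar Γ = (g, 𝒜) can be transformed into an equivalent graph extension grammar Γ' = (g', 𝒜') with L(Γ') = L(Γ) such that the co-domain type s of every extension and union operation in 𝒜' satisfies |s| ≥ 1, i.e., no extension or union operation produces graphs of type 0. -/

import Mathlib

structure GEGraph (ν Ld Lb : Type) where
  V : Set ν
  E : Set (ν × Lb × ν)
  lab : ν → Ld
  port : List ν

def GEGraph.IsEmptyGraph {ν Ld Lb : Type} (G : GEGraph ν Ld Lb) : Prop :=
  G.V = ∅ ∧ G.E = ∅ ∧ G.port = []

def CloneWitness {ν Ld Lb : Type} (G : GEGraph ν Ld Lb) (C : Set ν) (Cv : ν → Set ν)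
    (G' : GEGraph ν Ld Lb) : Prop :=
  (∀ v, v ∈ G.V → v ∉ C → Cv v = {v}) ∧
  (∀ u v, u ∈ G.V → v ∈ G.V → u ≠ v → Disjoint (Cv u) (Cv v)) ∧
  G'.V = (⋃ v ∈ G.V, Cv v) ∧
  G'.E = {e | ∃ u ℓ w, (u, ℓ, w) ∈ G.E ∧ e.1 ∈ Cv u ∧ e.2.1 = ℓ ∧ e.2.2 ∈ Cv w} ∧
  (∀ v, v ∈ G.V → ∀ v' ∈ Cv v, G'.lab v' = G.lab v) ∧
  G'.port = G.port

def Clone {ν Ld Lb : Type} (G : GEGraph ν Ld Lb) (C : Set ν) : Set (GEGraph ν Ld Lb) :=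
  {G' | ∃ Cv, CloneWitness G C Cv G'}

structure ExpOp (ν Ld Lb : Type) where
  V : Set ν
  E : Set (ν × Lb × ν)
  lab : ν → Ld
  port : List ν
  dock : List ν
  C : Set ν
  E_sub : ∀ e ∈ E, e.1 ∈ V ∧ e.2.2 ∈ V
  port_nodup : port.Nodup
  dock_nodup : dock.Nodup
  port_sub : ∀ v ∈ port, v ∈ V
  dock_sub : ∀ v ∈ dock, v ∈ V
  C_sub : C ⊆ V \ ({v | v ∈ port} ∪ {v | v ∈ dock})

namespace ExpOp
variable {ν Ld Lb : Type}

def und (Φ : ExpOp ν Ld Lb) : GEGraph ν Ld Lb := ⟨Φ.V, Φ.E, Φ.lab, Φ.port⟩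

def NEW (Φ : ExpOp ν Ld Lb) : Set ν := {v | v ∈ Φ.port} \ {v | v ∈ Φ.dock}

def CONT (Φ : ExpOp ν Ld Lb) : Set ν := Φ.V \ ({v | v ∈ Φ.port} ∪ {v | v ∈ Φ.dock})

/-- (R1): every edge source lies in NEW. -/
def R1 (Φ : ExpOp ν Ld Lb) : Prop := ∀ e ∈ Φ.E, e.1 ∈ Φ.NEW

/-- (R2): every dock node that is not a port is the target of some edge. -/
def R2 (Φ : ExpOp ν Ld Lb) : Prop := ∀ v ∈ Φ.dock, v ∉ Φ.port → ∃ e ∈ Φ.E, e.2.2 = v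

/-- (R3): no isolated context nodes. -/
def R3 (Φ : ExpOp ν Ld Lb) : Prop := ∀ v ∈ Φ.V, v ∉ Φ.port → ∃ e ∈ Φ.E, e.2.2 = v

end ExpOp

def Apply {ν Ld Lb : Type} (Φ : ExpOp ν Ld Lb) (G H : GEGraph ν Ld Lb) : Prop :=
  G.port.length = Φ.dock.length ∧
  ∃ (Cv : ν → Set ν) (G'' : GEGraph ν Ld Lb) (μ : ν → ν),
    CloneWitness Φ.und Φ.C Cv G'' ∧
    Set.InjOn μ G''.V ∧
    (∀ v ∈ Φ.NEW, μ v ∉ G.V) ∧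
    Φ.dock.map μ = G.port ∧
    (∀ v ∈ Φ.CONT, ∀ v' ∈ Cv v, μ v' ∈ G.V ∧ μ v' ∉ {x | x ∈ G.port} ∧
      G.lab (μ v') = Φ.lab v) ∧
    H.V = G.V ∪ μ '' G''.V ∧
    H.E = G.E ∪ {e | ∃ e' ∈ G''.E, e = (μ e'.1, e'.2.1, μ e'.2.2)} ∧
    (∀ v ∈ G.V, H.lab v = G.lab v) ∧
    (∀ v' ∈ G''.V, μ v' ∉ G.V → H.lab (μ v') = G''.lab v') ∧
    H.port = G''.port.map μ

def UnionOf {ν Ld Lb : Type} (G₁ G₂ H : GEGraph ν Ld Lb) : Prop :=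
  Disjoint G₁.V G₂.V ∧
  H.V = G₁.V ∪ G₂.V ∧
  H.E = G₁.E ∪ G₂.E ∧
  (∀ v ∈ G₁.V, H.lab v = G₁.lab v) ∧
  (∀ v ∈ G₂.V, H.lab v = G₂.lab v) ∧
  H.port = G₁.port ++ G₂.port

/-- A graph extension grammar: a regular tree grammar whose symbols are interpreted as the
constant `φ`, extension operations (satisfying (R1) and (R2)), and union operations, with
nonterminals typed by natural numbers (the number of ports). -/
structure GEG (ν Ld Lb NT : Type) where
  typeOf : NT → ℕ
  S : NT
  prodPhi : NT → Prop
  prodExt : NT → ExpOp ν Ld Lb → NT → Prop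
  prodUnion : NT → NT → NT → Prop
  phi_type : ∀ A, prodPhi A → typeOf A = 0
  ext_type : ∀ A Φ B, prodExt A Φ B →
    typeOf A = Φ.port.length ∧ typeOf B = Φ.dock.length ∧ Φ.R1 ∧ Φ.R2
  union_type : ∀ A B C, prodUnion A B C → typeOf A = typeOf B + typeOf C

/-- `Γ.Derives A G` holds iff `G ∈ val_𝒜(L_A(g))`, i.e. some tree derivable from `A`
evaluates (nondeterministically) to `G`. -/
inductive GEG.Derives {ν Ld Lb NT : Type} (Γ : GEG ν Ld Lb NT) :
    NT → GEGraph ν Ld Lb → Prop where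
  | phi {A : NT} {G : GEGraph ν Ld Lb} : Γ.prodPhi A → G.IsEmptyGraph → Γ.Derives A G
  | ext {A : NT} {Φ : ExpOp ν Ld Lb} {B : NT} {G H : GEGraph ν Ld Lb} :
      Γ.prodExt A Φ B → Γ.Derives B G → Apply Φ G H → Γ.Derives A H
  | union {A B C : NT} {G₁ G₂ H : GEGraph ν Ld Lb} :
      Γ.prodUnion A B C → Γ.Derives B G₁ → Γ.Derives C G₂ → UnionOf G₁ G₂ H →
      Γ.Derives A H

lemma derives_type_zero {ν Ld Lb NT : Type} (Γ : GEG ν Ld Lb NT) :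
    ∀ {A : NT} {G : GEGraph ν Ld Lb}, Γ.Derives A G → Γ.typeOf A = 0 → G.IsEmptyGraph := by
  intro A G h
  induction h with
  | phi hp he => intro _; exact he
  | @ext A Φ B G H hprod hder happly ih =>
    intro hA
    obtain ⟨hAlen, hBlen, hR1, hR2⟩ := Γ.ext_type A Φ B hprod
    have hport : Φ.port = [] := List.length_eq_zero_iff.mp (hAlen ▸ hA)
    have hE : Φ.E = ∅ := by
      ext e
      simp only [Set.mem_empty_iff_false, iff_false]
      intro he
      have := hR1 e he
      rw [ExpOp.NEW, hport] at this
      simpa using this.1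
    have hdock : Φ.dock = [] := by
      rw [List.eq_nil_iff_forall_not_mem]
      intro v hv
      have hvnp : v ∉ Φ.port := by rw [hport]; simp
      obtain ⟨e, heE, _⟩ := hR2 v hv hvnp
      rw [hE] at heE; exact heE
    have hGempty : G.IsEmptyGraph := ih (by rw [hBlen, hdock]; rfl)
    obtain ⟨hGV, hGE, hGport⟩ := hGempty
    obtain ⟨hlen, Cv, G'', μ, hcw, hinj, hnew, hdockmap, hcont, hV, hE', hlab1, hlab2, hHport⟩ :=
      happly
    obtain ⟨h1, h2, hV'', hE'', hlab'', hport''⟩ := hcw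
    -- every node of Φ is a context node, whose clones must map into G.V = ∅
    have hCvempty : ∀ v ∈ Φ.V, Cv v = ∅ := by
      intro v hv
      ext v'
      simp only [Set.mem_empty_iff_false, iff_false]
      intro hv'
      have hvCONT : v ∈ Φ.CONT := by
        refine ⟨hv, ?_⟩
        rw [hport, hdock]; simp
      have := (hcont v hvCONT v' hv').1
      rw [hGV] at this; exact this
    have hG''V : G''.V = ∅ := by
      rw [hV'']
      ext x
      simp only [Set.mem_iUnion, Set.mem_empty_iff_false, iff_false, not_exists]
      intro v hv hx
      rw [hCvempty v hv] at hx
      exact hx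
    have hG''E : G''.E = ∅ := by
      rw [hE'']
      ext e
      simp only [Set.mem_empty_iff_false, iff_false]
      rintro ⟨u, ℓ, w, he, -⟩
      rw [show Φ.und.E = Φ.E from rfl, hE] at he
      exact he
    refine ⟨?_, ?_, ?_⟩
    · rw [hV, hGV, hG''V]; simp
    · rw [hE', hGE, hG''E]; simp
    · rw [hHport, hport'', show Φ.und.port = Φ.port from rfl, hport]; rfl
  | @union A B C G₁ G₂ H hprod hd1 hd2 hu ih1 ih2 =>
    intro hA
    have htype := Γ.union_type A B C hprod
    rw [hA] at htype
    have hB : Γ.typeOf B = 0 := by omega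
    have hC : Γ.typeOf C = 0 := by omega
    obtain ⟨h1V, h1E, h1p⟩ := ih1 hB
    obtain ⟨h2V, h2E, h2p⟩ := ih2 hC
    obtain ⟨_, hV, hE, _, _, hp⟩ := hu
    exact ⟨by rw [hV, h1V, h2V]; simp, by rw [hE, h1E, h2E]; simp,
      by rw [hp, h1p, h2p]; rfl⟩

lemma derives_empty_swap {ν Ld Lb NT : Type} (Γ : GEG ν Ld Lb NT) {A : NT}
    {G₀ : GEGraph ν Ld Lb} (h : Γ.Derives A G₀) (h₀ : G₀.IsEmptyGraph) :
    ∀ G : GEGraph ν Ld Lb, G.IsEmptyGraph → Γ.Derives A G := by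
  induction h with
  | phi hp _ => intro G hG; exact GEG.Derives.phi hp hG
  | @ext A Φ B G' H hprod hder happly ih =>
    intro G hG
    obtain ⟨hHV, hHE, hHp⟩ := h₀
    obtain ⟨hGV, hGE, hGp⟩ := hG
    obtain ⟨hlen, Cv, G'', μ, hcw, hinj, hnew, hdockmap, hcont, hV, hE', hlab1, hlab2, hHport⟩ :=
      happly
    have hG'V : G'.V = ∅ := by
      rw [hHV] at hV
      exact Set.union_empty_iff.mp hV.symm |>.1
    have himg : μ '' G''.V = ∅ := by
      rw [hHV] at hV
      exact Set.union_empty_iff.mp hV.symm |>.2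
    have hG''V : G''.V = ∅ := Set.image_eq_empty.mp himg
    refine GEG.Derives.ext hprod hder ?_
    refine ⟨hlen, Cv, G'', μ, hcw, hinj, hnew, hdockmap, hcont, ?_, ?_, ?_, ?_, ?_⟩
    · rw [hGV, ← hHV, hV]
    · rw [hGE, ← hHE, hE']
    · intro v hv; rw [hG'V] at hv; exact absurd hv (Set.notMem_empty v)
    · intro v' hv'; rw [hG''V] at hv'; exact absurd hv' (Set.notMem_empty v')
    · rw [hGp, ← hHp, hHport]
  | @union A B C G₁ G₂ H hprod hd1 hd2 hu ih1 ih2 =>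
    intro G hG
    obtain ⟨hHV, hHE, hHp⟩ := h₀
    obtain ⟨hGV, hGE, hGp⟩ := hG
    obtain ⟨hdisj, hV, hE, hl1, hl2, hp⟩ := hu
    have h1V : G₁.V = ∅ := by rw [hHV] at hV; exact Set.union_empty_iff.mp hV.symm |>.1
    have h2V : G₂.V = ∅ := by rw [hHV] at hV; exact Set.union_empty_iff.mp hV.symm |>.2
    refine GEG.Derives.union hprod hd1 hd2 ?_
    refine ⟨hdisj, by rw [hGV, ← hHV, hV], by rw [hGE, ← hHE, hE], ?_, ?_,
      by rw [hGp, ← hHp, hp]⟩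
    · intro v hv; rw [h1V] at hv; exact absurd hv (Set.notMem_empty v)
    · intro v hv; rw [h2V] at hv; exact absurd hv (Set.notMem_empty v)

/-- normal form: every graph extension grammar can be transformed into an
equivalent one in which the co-domain type of every extension and union operation is at
least 1. -/
theorem normal_form {ν Ld Lb NT : Type} (Γ : GEG ν Ld Lb NT) :
    ∃ Γ' : GEG ν Ld Lb NT,
      (∀ G, Γ'.Derives Γ'.S G ↔ Γ.Derives Γ.S G) ∧
      (∀ A Φ B, Γ'.prodExt A Φ B → 1 ≤ Φ.port.length) ∧
      (∀ A B C, Γ'.prodUnion A B C → 1 ≤ Γ'.typeOf A) := by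
  refine ⟨{
    typeOf := Γ.typeOf
    S := Γ.S
    prodPhi := fun A => Γ.typeOf A = 0 ∧ ∃ G, Γ.Derives A G ∧ G.IsEmptyGraph
    prodExt := fun A Φ B => Γ.prodExt A Φ B ∧ 1 ≤ Φ.port.length
    prodUnion := fun A B C => Γ.prodUnion A B C ∧ 1 ≤ Γ.typeOf A
    phi_type := fun A h => h.1
    ext_type := fun A Φ B h => Γ.ext_type A Φ B h.1
    union_type := fun A B C h => Γ.union_type A B C h.1
  }, ?_, fun A Φ B h => h.2, fun A B C h => h.2⟩
  set Γ' : GEG ν Ld Lb NT := {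
    typeOf := Γ.typeOf
    S := Γ.S
    prodPhi := fun A => Γ.typeOf A = 0 ∧ ∃ G, Γ.Derives A G ∧ G.IsEmptyGraph
    prodExt := fun A Φ B => Γ.prodExt A Φ B ∧ 1 ≤ Φ.port.length
    prodUnion := fun A B C => Γ.prodUnion A B C ∧ 1 ≤ Γ.typeOf A
    phi_type := fun A h => h.1
    ext_type := fun A Φ B h => Γ.ext_type A Φ B h.1
    union_type := fun A B C h => Γ.union_type A B C h.1
  } with hΓ'
  have fwd : ∀ A G, Γ'.Derives A G → Γ.Derives A G := by
    intro A G h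
    induction h with
    | phi hp he =>
      obtain ⟨_, G₀, hd, h₀⟩ := hp
      exact derives_empty_swap Γ hd h₀ _ he
    | ext hprod _ happly ih => exact GEG.Derives.ext hprod.1 ih happly
    | union hprod _ _ hu ih1 ih2 => exact GEG.Derives.union hprod.1 ih1 ih2 hu
  have bwd : ∀ A G, Γ.Derives A G → Γ'.Derives A G := by
    intro A G h
    induction h with
    | @phi A G hp he =>
      exact GEG.Derives.phi (show Γ'.prodPhi A from
        ⟨Γ.phi_type A hp, G, GEG.Derives.phi hp he, he⟩) he
    | @ext A Φ B G H hprod hder happly ih =>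
      by_cases hpos : 1 ≤ Φ.port.length
      · exact GEG.Derives.ext (show Γ'.prodExt A Φ B from ⟨hprod, hpos⟩) ih happly
      · have hA : Γ.typeOf A = 0 := by
          have := (Γ.ext_type A Φ B hprod).1
          omega
        have hd : Γ.Derives A H := GEG.Derives.ext hprod hder happly
        have hempty := derives_type_zero Γ hd hA
        exact GEG.Derives.phi (show Γ'.prodPhi A from ⟨hA, H, hd, hempty⟩) hempty
    | @union A B C G₁ G₂ H hprod hd1 hd2 hu ih1 ih2 =>
      by_cases hpos : 1 ≤ Γ.typeOf A
      · exact GEG.Derives.union (show Γ'.prodUnion A B C from ⟨hprod, hpos⟩) ih1 ih2 hu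
      · have hA : Γ.typeOf A = 0 := by omega
        have hd : Γ.Derives A H := GEG.Derives.union hprod hd1 hd2 hu
        have hempty := derives_type_zero Γ hd hA
        exact GEG.Derives.phi (show Γ'.prodPhi A from ⟨hA, H, hd, hempty⟩) hempty
  exact fun G => ⟨fwd _ G, bwd _ G⟩
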